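/- Let Δ ⊆ ℝⁿ be a convex polytope (the convex hull of a finite set) and let S be a finite union of proper faces of Δ. Then there exists an open convex subset U of ℝⁿ such that Δ \ S = Δ ∩ U. -/

import Mathlib

/-- `F` is a face of the convex set `Δ ⊆ ℝⁿ`: either `F = Δ`, or `F` is the
intersection of `Δ` with a supporting hyperplane (a hyperplane meeting `Δ`
with `Δ` contained in one of the closed half-spaces it bounds). -/
def IsFace {n : ℕ} (Δ F : Set (Fin n → ℝ)) : Prop :=
  F = Δ ∨ ∃ (ℓ : (Fin n → ℝ) →ₗ[ℝ] ℝ) (c : ℝ), ℓ ≠ 0 ∧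
    (∀ x ∈ Δ, c ≤ ℓ x) ∧ (∃ x ∈ Δ, ℓ x = c) ∧ F = {x ∈ Δ | ℓ x = c}

/-- If `Δ ⊆ ℝⁿ` is a convex polytope and `S` is a finite union of proper
faces, then there exists an open convex `U` with `Δ \ S = Δ ∩ U`. -/
theorem stmt_6 {n : ℕ} (t : Finset (Fin n → ℝ)) (Δ : Set (Fin n → ℝ))
    (hΔ : Δ = convexHull ℝ (t : Set (Fin n → ℝ)))
    (fs : Finset (Set (Fin n → ℝ)))
    (hfs : ∀ F ∈ fs, IsFace Δ F ∧ F ⊂ Δ)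
    (S : Set (Fin n → ℝ)) (hS : S = ⋃ F ∈ fs, F) :
    ∃ U : Set (Fin n → ℝ), IsOpen U ∧ Convex ℝ U ∧ Δ \ S = Δ ∩ U := by
  have h : ∀ F ∈ fs, ∃ (ℓ : (Fin n → ℝ) →ₗ[ℝ] ℝ) (c : ℝ),
      (∀ x ∈ Δ, c ≤ ℓ x) ∧ F = {x ∈ Δ | ℓ x = c} := by
    intro F hF
    obtain ⟨hface, hssub⟩ := hfs F hF
    rcases hface with h | ⟨ℓ, c, _, hge, _, hFeq⟩
    · exact absurd h hssub.ne
    · exact ⟨ℓ, c, hge, hFeq⟩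
  choose! ℓ c hge hFeq using h
  refine ⟨⋂ F ∈ fs, {x | c F < ℓ F x}, ?_, ?_, ?_⟩
  · exact Set.Finite.isOpen_biInter fs.finite_toSet fun F _ =>
      isOpen_lt continuous_const (ℓ F).continuous_of_finiteDimensional
  · exact convex_iInter₂ fun F _ => convex_halfSpace_gt (ℓ F).isLinear (c F)
  · ext x
    simp only [Set.mem_diff, hS, Set.mem_iUnion, Set.mem_inter_iff, Set.mem_iInter,
      Set.mem_setOf_eq, not_exists]
    constructor
    · rintro ⟨hxΔ, hxS⟩
      refine ⟨hxΔ, fun F hF => ?_⟩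
      have hne : x ∉ F := hxS F hF
      rw [hFeq F hF] at hne
      have := hge F hF x hxΔ
      rcases lt_or_eq_of_le this with h | h
      · exact h
      · exact absurd ⟨hxΔ, h.symm⟩ hne
    · rintro ⟨hxΔ, hlt⟩
      refine ⟨hxΔ, fun F hF hxF => ?_⟩
      rw [hFeq F hF] at hxF
      exact absurd hxF.2 (hlt F hF).ne'
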